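/- Let φ be a fundamental function. Then there exists a concave fundamental function ψ: [1,∞) → (0,∞) such that φ(x) ≤ ψ(x) ≤ 2φ(x) for all x ∈ [1,∞). Moreover, δ_ψ(y) ≥ δ_φ(y) for all y ∈ [1,∞). -/

import Mathlib

open scoped BigOperators

section CommonDefs

variable {X : Type*} [NormedAddCommGroup X] [NormedSpace ℝ X]

/-- `(e, coord)` is a Schauder basis of `X` with biorthogonal functionals `coord`:
the functionals are biorthogonal to the basis vectors and every `x` is the limit of the
partial sums of its expansion `Σ coord i x • e i`. -/
structure IsSchauderBasis (e : ℕ → X) (coord : ℕ → X →L[ℝ] ℝ) : Prop where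
  biorth : ∀ i j, coord i (e j) = if i = j then 1 else 0
  expansion : ∀ x : X,
    Filter.Tendsto (fun n => ∑ i ∈ Finset.range n, coord i x • e i)
      Filter.atTop (nhds x)

/-- The best `m`-term approximation error `σ_m(x)` w.r.t. the norm `nn`. -/
noncomputable def bestApprox (e : ℕ → X) (nn : X → ℝ) (m : ℕ) (x : X) : ℝ :=
  sInf { r | ∃ (A : Finset ℕ) (a : ℕ → ℝ), A.card ≤ m ∧
    r = nn (x - ∑ i ∈ A, a i • e i) }

/-- `A` is a set of coordinates of `x` of largest modulus (a greedy set):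
the `m`-th greedy approximant of `x` is `∑ i ∈ A, coord i x • e i` for a greedy set of
cardinality `m`. -/
def GreedySet (coord : ℕ → X →L[ℝ] ℝ) (x : X) (A : Finset ℕ) : Prop :=
  ∀ i ∈ A, ∀ j ∉ A, |coord j x| ≤ |coord i x|

/-- The basis `(e, coord)` is `C`-greedy w.r.t. the norm `nn`:
`‖x - G_m(x)‖ ≤ C σ_m(x)` for every `x` and `m` (for any choice of `m`-th greedy
approximant `G_m(x)`). -/
def IsGreedyWith (e : ℕ → X) (coord : ℕ → X →L[ℝ] ℝ) (nn : X → ℝ) (C : ℝ) : Prop :=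
  ∀ (x : X) (m : ℕ) (A : Finset ℕ), A.card = m → GreedySet coord x A →
    nn (x - ∑ i ∈ A, coord i x • e i) ≤ C * bestApprox e nn m x

/-- Suppression `K`-unconditionality w.r.t. the norm `nn`. -/
def IsSuppressionUnconditionalWith (e : ℕ → X) (nn : X → ℝ) (K : ℝ) : Prop :=
  ∀ (s A : Finset ℕ) (a : ℕ → ℝ), A ⊆ s →
    nn (∑ i ∈ A, a i • e i) ≤ K * nn (∑ i ∈ s, a i • e i)

/-- `K`-unconditionality w.r.t. the norm `nn`. -/
def IsUnconditionalWith (e : ℕ → X) (nn : X → ℝ) (K : ℝ) : Prop :=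
  ∀ (s : Finset ℕ) (a b : ℕ → ℝ), (∀ i, |a i| ≤ |b i|) →
    nn (∑ i ∈ s, a i • e i) ≤ K * nn (∑ i ∈ s, b i • e i)

/-- `Δ`-democracy w.r.t. the norm `nn`. -/
def IsDemocraticWith (e : ℕ → X) (nn : X → ℝ) (Δ : ℝ) : Prop :=
  ∀ A B : Finset ℕ, A.card ≤ B.card →
    nn (∑ i ∈ A, e i) ≤ Δ * nn (∑ i ∈ B, e i)

/-- The basis is normalized w.r.t. the norm `nn`. -/
def IsNormalizedWith (e : ℕ → X) (nn : X → ℝ) : Prop :=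
  ∀ i, nn (e i) = 1

/-- The basis is seminormalized. -/
def IsSeminormalized (e : ℕ → X) : Prop :=
  ∃ c C : ℝ, 0 < c ∧ ∀ i, c ≤ ‖e i‖ ∧ ‖e i‖ ≤ C

/-- The fundamental function `φ(n) = sup_{|A| ≤ n} ‖Σ_{i∈A} e_i‖` w.r.t. the norm `nn`. -/
noncomputable def fundFn (e : ℕ → X) (nn : X → ℝ) (n : ℕ) : ℝ :=
  sSup { r | ∃ A : Finset ℕ, A.card ≤ n ∧ r = nn (∑ i ∈ A, e i) }

/-- The dual norm (w.r.t. `nn`) of `∑_{i∈A} e_i^*`. -/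
noncomputable def dualNormFinset (coord : ℕ → X →L[ℝ] ℝ) (nn : X → ℝ) (A : Finset ℕ) : ℝ :=
  sSup { r | ∃ x : X, nn x ≤ 1 ∧ r = |∑ i ∈ A, coord i x| }

/-- The dual fundamental function `φ*(n) = sup_{|A| ≤ n} ‖Σ_{i∈A} e_i^*‖*` w.r.t. `nn`. -/
noncomputable def dualFundFn (coord : ℕ → X →L[ℝ] ℝ) (nn : X → ℝ) (n : ℕ) : ℝ :=
  sSup { r | ∃ A : Finset ℕ, A.card ≤ n ∧ r = dualNormFinset coord nn A }

/-- `Δ`-bidemocracy w.r.t. the norm `nn`: `φ(n) φ*(n) ≤ Δ n` for all `n`. -/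
def IsBidemocraticWith (e : ℕ → X) (coord : ℕ → X →L[ℝ] ℝ) (nn : X → ℝ) (Δ : ℝ) : Prop :=
  ∀ n : ℕ, fundFn e nn n * dualFundFn coord nn n ≤ Δ * n

/-- `nn` is a norm on `X` equivalent to the original norm. -/
def IsEquivNorm (nn : X → ℝ) : Prop :=
  (∀ x y : X, nn (x + y) ≤ nn x + nn y) ∧
  (∀ (a : ℝ) (x : X), nn (a • x) = |a| * nn x) ∧
  ∃ c C : ℝ, 0 < c ∧ ∀ x : X, c * ‖x‖ ≤ nn x ∧ nn x ≤ C * ‖x‖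

/-- The (finitely supported) vector `Σ_i f i • e i` with coefficients `f ∈ c₀₀`. -/
noncomputable def finVec (e : ℕ → X) (f : ℕ →₀ ℝ) : X :=
  f.sum fun i c => c • e i

/-- `y = w + t` is a greedy rearrangement of `x = w + u`: the coefficient sequences
`w, u, t` have pairwise disjoint supports, `|supp u| = |supp t|`, and
`‖w‖_∞ ≤ |u_i| = |t_j|` for all `i ∈ supp u`, `j ∈ supp t`. -/
def IsGreedyRearrangement (w u t : ℕ →₀ ℝ) : Prop :=
  Disjoint w.support u.support ∧ Disjoint w.support t.support ∧
  Disjoint u.support t.support ∧ u.support.card = t.support.card ∧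
  (∀ i ∈ u.support, ∀ j ∈ t.support, |u i| = |t j|) ∧
  (∀ n : ℕ, ∀ i ∈ u.support, |w n| ≤ |u i|)

end CommonDefs

section FundDefs

/-- A fundamental (quasi-concave) function on `[1, ∞)`: positive, increasing, and
`x ↦ φ(x)/x` is decreasing. -/
def IsFundamentalFunction (φ : ℝ → ℝ) : Prop :=
  (∀ x : ℝ, 1 ≤ x → 0 < φ x) ∧
  (∀ x y : ℝ, 1 ≤ x → x ≤ y → φ x ≤ φ y) ∧
  (∀ x y : ℝ, 1 ≤ x → x ≤ y → φ y / y ≤ φ x / x)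

/-- `δ_φ(y) = liminf_{x→∞} φ(yx)/(y φ(x))`. -/
noncomputable def deltaFn (φ : ℝ → ℝ) (y : ℝ) : ℝ :=
  Filter.liminf (fun x : ℝ => φ (y * x) / (y * φ x)) Filter.atTop

/-- `δ(φ) = inf_{y ≥ 1} δ_φ(y)`. -/
noncomputable def deltaParam (φ : ℝ → ℝ) : ℝ :=
  sInf { d | ∃ y : ℝ, 1 ≤ y ∧ d = deltaFn φ y }

/-- Equivalence of fundamental functions. -/
def FundEquiv (φ ψ : ℝ → ℝ) : Prop :=
  ∃ a b : ℝ, 0 < a ∧ 0 < b ∧ ∀ x : ℝ, 1 ≤ x → a * φ x ≤ ψ x ∧ ψ x ≤ b * φ x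

end FundDefs

set_option maxHeartbeats 2000000 in
/-- every fundamental function `φ` admits a concave fundamental function
`ψ` with `φ(x) ≤ ψ(x) ≤ 2φ(x)` for all `x ≥ 1`, and moreover `δ_ψ(y) ≥ δ_φ(y)` for all
`y ≥ 1`. -/
theorem exists_concave_fundamentalFunction (φ : ℝ → ℝ)
    (hφ : IsFundamentalFunction φ) :
    ∃ ψ : ℝ → ℝ, IsFundamentalFunction ψ ∧ ConcaveOn ℝ (Set.Ici (1:ℝ)) ψ ∧
      (∀ x : ℝ, 1 ≤ x → φ x ≤ ψ x ∧ ψ x ≤ 2 * φ x) ∧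
      (∀ y : ℝ, 1 ≤ y → deltaFn φ y ≤ deltaFn ψ y) := by
  obtain ⟨hpos, hmono, hdec⟩ := hφ
  set S : ℝ → Set ℝ := fun x => {r | ∃ t : ℝ, 1 ≤ t ∧ r = φ t * (1 + x / t)} with hSdef
  set ψ : ℝ → ℝ := fun x => sInf (S x) with hψdef
  have hSne : ∀ x, (S x).Nonempty := fun x => ⟨φ 1 * (1 + x / 1), 1, le_refl 1, rfl⟩
  have hSbdd : ∀ x, 0 ≤ x → BddBelow (S x) := by
    intro x hx
    refine ⟨0, ?_⟩
    rintro r ⟨t, ht, rfl⟩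
    have ht0 : (0:ℝ) < t := lt_of_lt_of_le one_pos ht
    have := hpos t ht
    positivity
  have hψle : ∀ x, 0 ≤ x → ∀ t, 1 ≤ t → ψ x ≤ φ t * (1 + x / t) :=
    fun x hx t ht => csInf_le (hSbdd x hx) ⟨t, ht, rfl⟩
  have hleψ : ∀ x (c : ℝ), (∀ t, 1 ≤ t → c ≤ φ t * (1 + x / t)) → c ≤ ψ x := by
    intro x c hc
    refine le_csInf (hSne x) ?_
    rintro r ⟨t, ht, rfl⟩; exact hc t ht
  clear_value S ψ
  have hφψ : ∀ x, 1 ≤ x → φ x ≤ ψ x := by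
    intro x hx
    refine hleψ x _ fun t ht => ?_
    have ht0 : (0:ℝ) < t := lt_of_lt_of_le one_pos ht
    have hx0 : (0:ℝ) < x := lt_of_lt_of_le one_pos hx
    have hφt : 0 < φ t := hpos t ht
    rcases le_total t x with h | h
    · have h1 : φ x / x ≤ φ t / t := hdec t x ht h
      rw [div_le_div_iff₀ hx0 ht0] at h1
      rw [← mul_le_mul_iff_left₀ ht0]
      have he : φ t * (1 + x / t) * t = φ t * t + φ t * x := by
        field_simp
      rw [he]
      nlinarith
    · have h1 : φ x ≤ φ t := hmono x t hx h
      have h2 : 0 ≤ x / t := by positivity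
      nlinarith
  have hψ2φ : ∀ x, 1 ≤ x → ψ x ≤ 2 * φ x := by
    intro x hx
    have hx0 : (0:ℝ) < x := lt_of_lt_of_le one_pos hx
    have := hψle x hx0.le x hx
    rwa [div_self (ne_of_gt hx0), show φ x * (1 + 1) = 2 * φ x by ring] at this
  have hψpos : ∀ x, 1 ≤ x → 0 < ψ x := fun x hx => lt_of_lt_of_le (hpos x hx) (hφψ x hx)
  have hψmono : ∀ x y, 1 ≤ x → x ≤ y → ψ x ≤ ψ y := by
    intro x y hx hxy
    have hx0 : (0:ℝ) ≤ x := le_trans zero_le_one hx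
    refine hleψ y _ fun t ht => ?_
    have ht0 : (0:ℝ) < t := lt_of_lt_of_le one_pos ht
    refine le_trans (hψle x hx0 t ht) ?_
    have := (hpos t ht).le
    gcongr
  have hψdec : ∀ x y, 1 ≤ x → x ≤ y → ψ y / y ≤ ψ x / x := by
    intro x y hx hxy
    have hx0 : (0:ℝ) < x := lt_of_lt_of_le one_pos hx
    have hy0 : (0:ℝ) < y := lt_of_lt_of_le hx0 hxy
    have H : ψ y * (x / y) ≤ ψ x := by
      refine hleψ x _ fun t ht => ?_
      have ht0 : (0:ℝ) < t := lt_of_lt_of_le one_pos ht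
      have h1 : ψ y * (x / y) ≤ φ t * (1 + y / t) * (x / y) :=
        mul_le_mul_of_nonneg_right (hψle y hy0.le t ht) (by positivity)
      refine h1.trans ?_
      have he : φ t * (1 + y / t) * (x / y) = φ t * (x / y + x / t) := by
        field_simp
      rw [he]
      have hxy1 : x / y ≤ 1 := (div_le_one hy0).mpr hxy
      have := (hpos t ht).le
      gcongr
    rw [div_le_div_iff₀ hy0 hx0]
    calc ψ y * x = ψ y * (x / y) * y := by field_simp
      _ ≤ ψ x * y := mul_le_mul_of_nonneg_right H hy0.le
  have hconc : ConcaveOn ℝ (Set.Ici (1:ℝ)) ψ := by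
    refine ⟨convex_Ici 1, ?_⟩
    intro x hx y hy a b ha hb hab
    simp only [Set.mem_Ici] at hx hy
    simp only [smul_eq_mul]
    have hx0 : (0:ℝ) ≤ x := le_trans zero_le_one hx
    have hy0 : (0:ℝ) ≤ y := le_trans zero_le_one hy
    refine hleψ _ _ fun t ht => ?_
    have ht0 : (0:ℝ) < t := lt_of_lt_of_le one_pos ht
    have h1 : a * ψ x + b * ψ y ≤ a * (φ t * (1 + x / t)) + b * (φ t * (1 + y / t)) :=
      add_le_add (mul_le_mul_of_nonneg_left (hψle x hx0 t ht) ha)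
        (mul_le_mul_of_nonneg_left (hψle y hy0 t ht) hb)
    refine h1.trans_eq ?_
    have hb' : b = 1 - a := by linarith
    subst hb'
    field_simp
    ring
  refine ⟨ψ, ⟨hψpos, hψmono, hψdec⟩, hconc, fun x hx => ⟨hφψ x hx, hψ2φ x hx⟩, ?_⟩
  -- the delta part
  intro y hy
  have hy0 : (0:ℝ) < y := lt_of_lt_of_le one_pos hy
  -- the limit c of φ x / x
  set T0 : Set ℝ := {r | ∃ t : ℝ, 1 ≤ t ∧ r = φ t / t} with hT0def
  have hT0ne : T0.Nonempty := ⟨φ 1 / 1, 1, le_refl 1, rfl⟩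
  have hT0bdd : BddBelow T0 := by
    refine ⟨0, ?_⟩
    rintro r ⟨t, ht, rfl⟩
    have ht0 : (0:ℝ) < t := lt_of_lt_of_le one_pos ht
    have := hpos t ht
    positivity
  set c : ℝ := sInf T0 with hcdef
  have hc_le : ∀ t, 1 ≤ t → c ≤ φ t / t := fun t ht => csInf_le hT0bdd ⟨t, ht, rfl⟩
  have hc0 : 0 ≤ c := by
    refine le_csInf hT0ne ?_
    rintro r ⟨t, ht, rfl⟩
    have ht0 : (0:ℝ) < t := lt_of_lt_of_le one_pos ht
    have := hpos t ht
    positivity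
  have htendφ : Filter.Tendsto (fun x => φ x / x) Filter.atTop (nhds c) := by
    rw [tendsto_order]
    constructor
    · intro a ha
      filter_upwards [Filter.eventually_ge_atTop (1:ℝ)] with x hx
      exact lt_of_lt_of_le ha (hc_le x hx)
    · intro a ha
      obtain ⟨r, ⟨t₀, ht₀, rfl⟩, hr⟩ := exists_lt_of_csInf_lt hT0ne ha
      filter_upwards [Filter.eventually_ge_atTop t₀] with x hx
      exact lt_of_le_of_lt (hdec t₀ x ht₀ hx) hr
  have htendψ : Filter.Tendsto (fun x => ψ x / x) Filter.atTop (nhds c) := by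
    rw [tendsto_order]
    constructor
    · intro a ha
      filter_upwards [Filter.eventually_ge_atTop (1:ℝ)] with x hx
      have hx0 : (0:ℝ) < x := lt_of_lt_of_le one_pos hx
      have : φ x / x ≤ ψ x / x := by gcongr; exact hφψ x hx
      exact lt_of_lt_of_le (lt_of_lt_of_le ha (hc_le x hx)) this
    · intro a ha
      have hmid : c < (c + a) / 2 := by linarith
      obtain ⟨r, ⟨t₀, ht₀, rfl⟩, hr⟩ := exists_lt_of_csInf_lt hT0ne hmid
      have ht₀0 : (0:ℝ) < t₀ := lt_of_lt_of_le one_pos ht₀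
      have hd0 : (0:ℝ) < (a - c) / 2 := by linarith
      have htc : Filter.Tendsto (fun x : ℝ => φ t₀ / x) Filter.atTop (nhds 0) :=
        Filter.Tendsto.div_atTop tendsto_const_nhds Filter.tendsto_id
      filter_upwards [Filter.eventually_ge_atTop (1:ℝ),
        htc.eventually_lt_const hd0] with x hx hx2
      have hx0 : (0:ℝ) < x := lt_of_lt_of_le one_pos hx
      have h1 : ψ x / x ≤ φ t₀ * (1 + x / t₀) / x := by
        have := hψle x hx0.le t₀ ht₀
        gcongr
      have he : φ t₀ * (1 + x / t₀) / x = φ t₀ / x + φ t₀ / t₀ := by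
        field_simp
      rw [he] at h1
      calc ψ x / x ≤ φ t₀ / x + φ t₀ / t₀ := h1
        _ < (a - c) / 2 + (c + a) / 2 := add_lt_add hx2 hr
        _ = a := by ring
  clear_value T0 c
  -- basic eventual bounds for the quotient functions
  have hg_le1 : ∀ᶠ x in Filter.atTop, φ (y * x) / (y * φ x) ≤ 1 := by
    filter_upwards [Filter.eventually_ge_atTop (1:ℝ)] with x hx
    have hx0 : (0:ℝ) < x := lt_of_lt_of_le one_pos hx
    have hxy : x ≤ y * x := le_mul_of_one_le_left hx0.le hy
    have h1 : φ (y * x) / (y * x) ≤ φ x / x := hdec x (y * x) hx hxy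
    rw [div_le_div_iff₀ (by positivity) hx0] at h1
    have hφx : 0 < φ x := hpos x hx
    rw [div_le_one (by positivity)]
    nlinarith
  have hg_nn : ∀ᶠ x in Filter.atTop, 0 ≤ φ (y * x) / (y * φ x) := by
    filter_upwards [Filter.eventually_ge_atTop (1:ℝ)] with x hx
    have h1 : 0 < φ x := hpos x hx
    have h2 : 0 < φ (y * x) := hpos (y * x) (le_trans hx (le_mul_of_one_le_left (by linarith) hy))
    positivity
  have hh_le1 : ∀ᶠ x in Filter.atTop, ψ (y * x) / (y * ψ x) ≤ 1 := by
    filter_upwards [Filter.eventually_ge_atTop (1:ℝ)] with x hx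
    have hx0 : (0:ℝ) < x := lt_of_lt_of_le one_pos hx
    have hxy : x ≤ y * x := le_mul_of_one_le_left hx0.le hy
    have h1 : ψ (y * x) / (y * x) ≤ ψ x / x := hψdec x (y * x) hx hxy
    rw [div_le_div_iff₀ (by positivity) hx0] at h1
    have hψx : 0 < ψ x := hψpos x hx
    rw [div_le_one (by positivity)]
    nlinarith
  have hh_nn : ∀ᶠ x in Filter.atTop, 0 ≤ ψ (y * x) / (y * ψ x) := by
    filter_upwards [Filter.eventually_ge_atTop (1:ℝ)] with x hx
    have h1 : 0 < ψ x := hψpos x hx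
    have h2 : 0 < ψ (y * x) := hψpos (y * x) (le_trans hx (le_mul_of_one_le_left (by linarith) hy))
    positivity
  rcases eq_or_lt_of_le hc0 with hc | hc
  · -- case c = 0
    by_contra hcon
    push_neg at hcon
    obtain ⟨b, hb1, hb2⟩ := exists_between hcon
    rcases le_or_gt b 0 with hb0 | hb0
    · have : (0:ℝ) ≤ deltaFn ψ y :=
        Filter.le_liminf_of_le (Filter.isCoboundedUnder_ge_of_eventually_le _ hh_le1) hh_nn
      linarith
    · obtain ⟨b', hb'1, hb'2⟩ := exists_between hb2
      have hbdd : Filter.IsBoundedUnder (· ≥ ·) Filter.atTop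
          (fun x => φ (y * x) / (y * φ x)) := ⟨0, Filter.eventually_map.mpr hg_nn⟩
      have hb'2' : b' < Filter.liminf (fun x : ℝ => φ (y * x) / (y * φ x)) Filter.atTop := hb'2
      have hev : ∀ᶠ t in Filter.atTop, b' < φ (y * t) / (y * φ t) :=
        Filter.eventually_lt_of_lt_liminf hb'2' hbdd
      obtain ⟨T', hT'⟩ := Filter.eventually_atTop.mp hev
      set T : ℝ := max T' 1 with hTdef
      have hT1 : (1:ℝ) ≤ T := le_max_right _ _
      have hyT0 : (0:ℝ) < y * T := by positivity
      have hyT1 : (1:ℝ) ≤ y * T := le_trans hT1 (le_mul_of_one_le_left (by linarith) hy)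
      have hφyT : 0 < φ (y * T) := hpos _ hyT1
      set ε : ℝ := φ (y * T) / (y * T * (2 * b * y)) with hεdef
      have hε0 : 0 < ε := by positivity
      have htend0 : Filter.Tendsto (fun x => φ x / x) Filter.atTop (nhds 0) := by
        rw [← hc] at htendφ; exact htendφ
      have hkey : ∀ᶠ x in Filter.atTop, b ≤ ψ (y * x) / (y * ψ x) := by
        filter_upwards [Filter.eventually_ge_atTop (1:ℝ),
          htend0.eventually_lt_const hε0] with x hx hcond
        have hx0 : (0:ℝ) < x := lt_of_lt_of_le one_pos hx
        have hyx1 : (1:ℝ) ≤ y * x := le_trans hx (le_mul_of_one_le_left hx0.le hy)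
        have hψx : 0 < ψ x := hψpos x hx
        have H : b * (y * ψ x) ≤ ψ (y * x) := by
          refine hleψ (y * x) _ fun s hs => ?_
          have hs0 : (0:ℝ) < s := lt_of_lt_of_le one_pos hs
          rcases le_or_gt (y * T) s with hcase | hcase
          · -- large s
            set t : ℝ := s / y with htdef
            have ht1 : (1:ℝ) ≤ t := by
              rw [htdef, le_div_iff₀ hy0]
              calc (1:ℝ) * y = y := one_mul y
                _ ≤ y * T := le_mul_of_one_le_right hy0.le hT1
                _ ≤ s := hcase
            have ht0 : (0:ℝ) < t := lt_of_lt_of_le one_pos ht1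
            have htT' : T' ≤ t := by
              rw [htdef, le_div_iff₀ hy0]
              calc T' * y ≤ T * y := mul_le_mul_of_nonneg_right (le_max_left _ _) hy0.le
                _ = y * T := mul_comm _ _
                _ ≤ s := hcase
            have hs_eq : y * t = s := by rw [htdef]; field_simp
            have hg := hT' t htT'
            have hφt : 0 < φ t := hpos t ht1
            have hkey2 : b' * (y * φ t) ≤ φ (y * t) := by
              rw [lt_div_iff₀ (by positivity)] at hg
              linarith
            have hA : ψ x ≤ φ t * (1 + x / t) := hψle x hx0.le t ht1
            have h1xt : (0:ℝ) ≤ 1 + x / t := by positivity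
            calc b * (y * ψ x) ≤ b' * (y * (φ t * (1 + x / t))) := by
                  have h2 : y * ψ x ≤ y * (φ t * (1 + x / t)) := by gcongr
                  exact mul_le_mul hb'1.le h2 (by positivity) (by linarith)
              _ = b' * (y * φ t) * (1 + x / t) := by ring
              _ ≤ φ (y * t) * (1 + x / t) := mul_le_mul_of_nonneg_right hkey2 h1xt
              _ = φ s * (1 + y * x / s) := by
                  rw [hs_eq.symm]
                  congr 1
                  rw [mul_div_mul_left x t (ne_of_gt hy0)]
              _ = φ s * (1 + y * x / s) := rfl
          · -- small s
            have hφs : 0 < φ s := hpos s hs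
            have hds : φ (y * T) / (y * T) ≤ φ s / s := hdec s (y * T) hs hcase.le
            calc b * (y * ψ x) ≤ b * (y * (2 * φ x)) := by
                  have := hψ2φ x hx
                  gcongr
              _ = 2 * b * y * (φ x / x * x) := by field_simp
              _ ≤ 2 * b * y * (ε * x) := by
                  have h2 : φ x / x ≤ ε := hcond.le
                  have hx0' : (0:ℝ) ≤ x := hx0.le
                  gcongr
              _ = φ (y * T) / (y * T) * x := by
                  rw [hεdef]; field_simp
              _ ≤ φ s / s * (y * x) := by
                  refine mul_le_mul hds ?_ hx0.le (by positivity)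
                  exact le_mul_of_one_le_left hx0.le hy
              _ = φ s * (y * x / s) := by ring
              _ ≤ φ s * (1 + y * x / s) := by
                  have : (0:ℝ) ≤ φ s := hφs.le
                  nlinarith
        have : b ≤ ψ (y * x) / (y * ψ x) := by
          rw [le_div_iff₀ (by positivity)]
          linarith
        exact this
      have : b ≤ deltaFn ψ y :=
        Filter.le_liminf_of_le (Filter.isCoboundedUnder_ge_of_eventually_le _ hh_le1) hkey
      linarith
  · -- case c > 0
    have hmul : Filter.Tendsto (fun x : ℝ => y * x) Filter.atTop Filter.atTop :=
      Filter.Tendsto.const_mul_atTop hy0 Filter.tendsto_id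
    have h1 : Filter.Tendsto (fun x => φ (y * x) / (y * x)) Filter.atTop (nhds c) :=
      htendφ.comp hmul
    have h2 : Filter.Tendsto (fun x => (φ (y * x) / (y * x)) / (φ x / x))
        Filter.atTop (nhds (c / c)) := h1.div htendφ (ne_of_gt hc)
    rw [div_self (ne_of_gt hc)] at h2
    have hgeq : Filter.Tendsto (fun x => φ (y * x) / (y * φ x)) Filter.atTop (nhds 1) := by
      refine h2.congr' ?_
      filter_upwards [Filter.eventually_ge_atTop (1:ℝ)] with x hx
      have hx0 : (0:ℝ) < x := lt_of_lt_of_le one_pos hx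
      have hφx : 0 < φ x := hpos x hx
      field_simp
    have h1' : Filter.Tendsto (fun x => ψ (y * x) / (y * x)) Filter.atTop (nhds c) :=
      htendψ.comp hmul
    have h2' : Filter.Tendsto (fun x => (ψ (y * x) / (y * x)) / (ψ x / x))
        Filter.atTop (nhds (c / c)) := h1'.div htendψ (ne_of_gt hc)
    rw [div_self (ne_of_gt hc)] at h2'
    have hheq : Filter.Tendsto (fun x => ψ (y * x) / (y * ψ x)) Filter.atTop (nhds 1) := by
      refine h2'.congr' ?_
      filter_upwards [Filter.eventually_ge_atTop (1:ℝ)] with x hx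
      have hx0 : (0:ℝ) < x := lt_of_lt_of_le one_pos hx
      have hψx : 0 < ψ x := hψpos x hx
      field_simp
    unfold deltaFn
    rw [hgeq.liminf_eq, hheq.liminf_eq]
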